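/- Let P be a rational polytope in ℝ^k and let Q_1, …, Q_n ⊆ P be finitely many rational polytopes contained in P. Then there exists a finite rational polytope chamber decomposition (P_s) of P such that for every chamber P_s, every face F of P_s, and every i ∈ {1, …, n}, either the intrinsic interior of F is contained in Q_i or the intrinsic interior of F is disjoint from Q_i. -/

import Mathlib

/-- A rational polytope in `ℝ^k` is the convex hull of a nonempty finite set of
points all of whose coordinates are rational. -/
def IsRationalPolytope {k : ℕ} (Q : Set (Fin k → ℝ)) : Prop :=
  ∃ S : Finset (Fin k → ℝ), S.Nonempty ∧
    (∀ x ∈ S, ∀ i, ∃ q : ℚ, x i = (q : ℝ)) ∧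
    Q = convexHull ℝ (S : Set (Fin k → ℝ))

/-- A finite rational polytope chamber decomposition of `P`: a finite family of
rational polytopes whose union is `P` and whose intrinsic (relative) interiors
are pairwise disjoint. -/
def IsRatPolyChamberDecomp {k : ℕ} (P : Set (Fin k → ℝ)) (m : ℕ)
    (Ps : Fin m → Set (Fin k → ℝ)) : Prop :=
  (∀ s, IsRationalPolytope (Ps s)) ∧
  (⋃ s, Ps s) = P ∧
  ∀ s t, s ≠ t →
    Disjoint (intrinsicInterior ℝ (Ps s)) (intrinsicInterior ℝ (Ps t))

/-- A face of a convex set `P ⊆ ℝ^k` is a nonempty, closed, convex subset of `P`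
which is extreme in `P`: whenever a point of `F` lies in the open segment
between two points of `P`, both endpoints lie in `F`. -/
def IsFace {k : ℕ} (P F : Set (Fin k → ℝ)) : Prop :=
  F.Nonempty ∧ IsClosed F ∧ Convex ℝ F ∧ IsExtreme ℝ P F


namespace RatChamber
open Finset

/-- affine functional with rational coefficients -/
abbrev Aff (d : ℕ) := (Fin d → ℚ) × ℚ

noncomputable def affEval {d : ℕ} (p : Aff d) (x : Fin d → ℝ) : ℝ :=
  (∑ i, (p.1 i : ℝ) * x i) + (p.2 : ℝ)

/-- linear part -/
noncomputable def linEval {d : ℕ} (p : Aff d) (x : Fin d → ℝ) : ℝ :=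
  ∑ i, (p.1 i : ℝ) * x i

def HSet {d : ℕ} (L : List (Aff d)) : Set (Fin d → ℝ) := {x | ∀ p ∈ L, 0 ≤ affEval p x}

def negAff {d : ℕ} (p : Aff d) : Aff d := (-p.1, -p.2)

def smulAff {d : ℕ} (q : ℚ) (p : Aff d) : Aff d := (q • p.1, q * p.2)

def addAff {d : ℕ} (p q : Aff d) : Aff d := (p.1 + q.1, p.2 + q.2)

lemma affEval_neg {d : ℕ} (p : Aff d) (x : Fin d → ℝ) : affEval (negAff p) x = -affEval p x := by
  unfold affEval negAff
  rw [show (∑ i, (((-p.1) i : ℚ) : ℝ) * x i) = ∑ i, -((p.1 i : ℝ) * x i) from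
    Finset.sum_congr rfl (by intros; simp [neg_mul]), Finset.sum_neg_distrib]
  push_cast; ring

lemma affEval_smul {d : ℕ} (q : ℚ) (p : Aff d) (x : Fin d → ℝ) :
    affEval (smulAff q p) x = q * affEval p x := by
  unfold affEval smulAff
  rw [show (∑ i, (((q • p.1) i : ℚ) : ℝ) * x i) = ∑ i, (q : ℝ) * ((p.1 i : ℝ) * x i) from
    Finset.sum_congr rfl (by intros; push_cast; simp; ring), ← Finset.mul_sum]
  push_cast; ring

lemma affEval_add {d : ℕ} (p q : Aff d) (x : Fin d → ℝ) :
    affEval (addAff p q) x = affEval p x + affEval q x := by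
  unfold affEval addAff
  rw [show (∑ i, (((p.1 + q.1) i : ℚ) : ℝ) * x i)
      = ∑ i, ((p.1 i : ℝ) * x i + (q.1 i : ℝ) * x i) from
    Finset.sum_congr rfl (by intros; push_cast; simp; ring), Finset.sum_add_distrib]
  push_cast; ring

lemma affEval_add_smul {d : ℕ} (p : Aff d) (x v : Fin d → ℝ) (c : ℝ) :
    affEval p (x + c • v) = affEval p x + c * linEval p v := by
  unfold affEval linEval
  rw [show (∑ i, (p.1 i : ℝ) * (x + c • v) i)
      = ∑ i, ((p.1 i : ℝ) * x i + c * ((p.1 i : ℝ) * v i)) from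
    Finset.sum_congr rfl (by intros; simp; ring), Finset.sum_add_distrib, ← Finset.mul_sum]
  ring

lemma affEval_sub {d : ℕ} (p : Aff d) (x y : Fin d → ℝ) :
    affEval p x - affEval p y = linEval p (x - y) := by
  unfold affEval linEval
  rw [show (∑ i, (p.1 i : ℝ) * (x - y) i) = ∑ i, ((p.1 i : ℝ) * x i - (p.1 i : ℝ) * y i) from
    Finset.sum_congr rfl (by intros; simp [mul_sub]), Finset.sum_sub_distrib]
  ring

lemma affEval_combo {d : ℕ} (p : Aff d) (x y : Fin d → ℝ) {a b : ℝ} (hab : a + b = 1) :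
    affEval p (a • x + b • y) = a * affEval p x + b * affEval p y := by
  unfold affEval
  rw [show (∑ i, (p.1 i : ℝ) * (a • x + b • y) i)
      = a * (∑ i, (p.1 i : ℝ) * x i) + b * (∑ i, (p.1 i : ℝ) * y i) from by
    rw [Finset.mul_sum, Finset.mul_sum, ← Finset.sum_add_distrib]
    exact Finset.sum_congr rfl (by intros; simp; ring)]
  linear_combination (-(p.2 : ℝ)) * hab

lemma convex_HSet {d : ℕ} (L : List (Aff d)) : Convex ℝ (HSet L) := by
  intro x hx y hy a b ha hb hab
  intro p hp
  rw [affEval_combo p x y hab]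
  exact add_nonneg (mul_nonneg ha (hx p hp)) (mul_nonneg hb (hy p hp))

lemma continuous_affEval {d : ℕ} (p : Aff d) : Continuous (affEval p) := by
  unfold affEval
  exact (continuous_finset_sum _ fun i _ => (continuous_const.mul (continuous_apply i))).add
    continuous_const

lemma isClosed_HSet {d : ℕ} (L : List (Aff d)) : IsClosed (HSet L) := by
  have : HSet L = ⋂ p ∈ L, {x | 0 ≤ affEval p x} := by
    ext x; simp [HSet]
  rw [this]
  exact isClosed_biInter fun p _ => isClosed_le continuous_const (continuous_affEval p)

lemma HSet_append {d : ℕ} (A B : List (Aff d)) : HSet (A ++ B) = HSet A ∩ HSet B := by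
  ext x
  simp [HSet, or_imp, forall_and]


-- FM section
def lastC {d : ℕ} (p : Aff (d + 1)) : ℚ := p.1 (Fin.last d)

def resAff {d : ℕ} (p : Aff (d + 1)) : Aff d := (fun i => p.1 i.castSucc, p.2)

lemma affEval_snoc {d : ℕ} (p : Aff (d + 1)) (y : Fin d → ℝ) (z : ℝ) :
    affEval p (Fin.snoc y z) = affEval (resAff p) y + (lastC p : ℝ) * z := by
  unfold affEval resAff lastC
  rw [Fin.sum_univ_castSucc]
  simp only [Fin.snoc_castSucc, Fin.snoc_last]
  ring

def fmElim {d : ℕ} (L : List (Aff (d + 1))) : List (Aff d) :=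
  ((L.filter fun p => lastC p = 0).map resAff) ++
  (((L ×ˢ L).filter fun pq => 0 < lastC pq.1 ∧ lastC pq.2 < 0).map
     fun pq => addAff (smulAff (-(lastC pq.2)) (resAff pq.1)) (smulAff (lastC pq.1) (resAff pq.2)))

lemma mem_fmElim {d : ℕ} (L : List (Aff (d + 1))) (y : Fin d → ℝ) :
    y ∈ HSet (fmElim L) ↔ ∃ z : ℝ, (Fin.snoc y z) ∈ HSet L := by
  classical
  constructor
  · intro hy
    -- uniform bound value
    set u : Aff (d+1) → ℝ := fun p => -affEval (resAff p) y / (lastC p : ℝ) with hu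
    set Lo : Finset ℝ := ((L.toFinset.filter fun p => 0 < lastC p).image u) with hLodef
    set Up : Finset ℝ := ((L.toFinset.filter fun p => lastC p < 0).image u) with hUpdef
    set z : ℝ := if hLo : Lo.Nonempty then Lo.max' hLo else
      if hUp : Up.Nonempty then Up.min' hUp else 0 with hzdef
    -- combo fact
    have combo : ∀ p ∈ L, ∀ q ∈ L, 0 < lastC p → lastC q < 0 →
        0 ≤ (-(lastC q) : ℝ) * affEval (resAff p) y + (lastC p : ℝ) * affEval (resAff q) y := by
      intro p hp q hq hcp hcq
      have hmem : addAff (smulAff (-(lastC q)) (resAff p)) (smulAff (lastC p) (resAff q))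
          ∈ fmElim L := by
        apply List.mem_append_right
        apply List.mem_map.2
        refine ⟨(p, q), ?_, rfl⟩
        rw [List.mem_filter]
        refine ⟨List.mem_product.2 ⟨hp, hq⟩, ?_⟩
        simp [hcp, hcq]
      have := hy _ hmem
      rwa [affEval_add, affEval_smul, affEval_smul, Rat.cast_neg] at this
    have key_lo_le_up : ∀ p ∈ L, ∀ q ∈ L, 0 < lastC p → lastC q < 0 → u p ≤ u q := by
      intro p hp q hq hcp hcq
      have hcp' : (0 : ℝ) < (lastC p : ℝ) := by exact_mod_cast hcp
      have hcq' : (0 : ℝ) < -(lastC q : ℝ) := by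
        have : (lastC q : ℝ) < 0 := by exact_mod_cast hcq
        linarith
      have h := combo p hp q hq hcp hcq
      rw [hu]
      have h2 : -affEval (resAff q) y / (lastC q : ℝ)
          = affEval (resAff q) y / (-(lastC q : ℝ)) := by
        rw [neg_div, div_neg]
      simp only
      rw [h2, div_le_div_iff₀ hcp' hcq']
      nlinarith
    have hlow : ∀ p ∈ L, 0 < lastC p → u p ≤ z := by
      intro p hp hc
      have hmem : u p ∈ Lo := by
        rw [hLodef]
        exact Finset.mem_image.2 ⟨p, Finset.mem_filter.2 ⟨List.mem_toFinset.2 hp, hc⟩, rfl⟩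
      have hLo : Lo.Nonempty := ⟨_, hmem⟩
      rw [hzdef]
      rw [dif_pos hLo]
      exact Finset.le_max' _ _ hmem
    have hup : ∀ p ∈ L, lastC p < 0 → z ≤ u p := by
      intro p hp hc
      have hmem : u p ∈ Up := by
        rw [hUpdef]
        exact Finset.mem_image.2 ⟨p, Finset.mem_filter.2 ⟨List.mem_toFinset.2 hp, hc⟩, rfl⟩
      have hUp : Up.Nonempty := ⟨_, hmem⟩
      rw [hzdef]
      by_cases hLo : Lo.Nonempty
      · rw [dif_pos hLo]
        obtain ⟨q, hq, hquy⟩ := Finset.mem_image.1 (Finset.max'_mem _ hLo)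
        obtain ⟨hqL, hqc⟩ := Finset.mem_filter.1 hq
        rw [← hquy]
        exact key_lo_le_up q (List.mem_toFinset.1 hqL) p hp hqc hc
      · rw [dif_neg hLo, dif_pos hUp]
        exact Finset.min'_le _ _ hmem
    refine ⟨z, ?_⟩
    intro p hp
    rw [affEval_snoc]
    rcases lt_trichotomy (lastC p) 0 with hc | hc | hc
    · have := hup p hp hc
      have hc' : (lastC p : ℝ) < 0 := by exact_mod_cast hc
      rw [hu] at this
      simp only at this
      rw [le_div_iff_of_neg hc'] at this
      linarith
    · have hmem : resAff p ∈ fmElim L := by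
        apply List.mem_append_left
        exact List.mem_map.2 ⟨p, List.mem_filter.2 ⟨hp, by simp [hc]⟩, rfl⟩
      have := hy _ hmem
      rw [hc]
      push_cast
      linarith
    · have := hlow p hp hc
      have hc' : (0 : ℝ) < (lastC p : ℝ) := by exact_mod_cast hc
      rw [hu] at this
      simp only at this
      rw [div_le_iff₀ hc'] at this
      linarith
  · rintro ⟨z, hz⟩
    intro p hp
    rcases List.mem_append.1 hp with h | h
    · obtain ⟨q, hq, rfl⟩ := List.mem_map.1 h
      obtain ⟨hqL, hq0⟩ := List.mem_filter.1 hq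
      have hq0' : lastC q = 0 := by simpa using hq0
      have := hz q hqL
      rw [affEval_snoc, hq0'] at this
      push_cast at this
      linarith
    · obtain ⟨⟨p₁, p₂⟩, hq, rfl⟩ := List.mem_map.1 h
      obtain ⟨hqL, hsign⟩ := List.mem_filter.1 hq
      obtain ⟨h1L, h2L⟩ := List.mem_product.1 hqL
      have hsign' : 0 < lastC p₁ ∧ lastC p₂ < 0 := by simpa using hsign
      have e1 := hz p₁ h1L
      have e2 := hz p₂ h2L
      rw [affEval_snoc] at e1 e2
      rw [affEval_add, affEval_smul, affEval_smul, Rat.cast_neg]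
      have hc1 : (0 : ℝ) < (lastC p₁ : ℝ) := by exact_mod_cast hsign'.1
      have hc2 : (lastC p₂ : ℝ) < 0 := by exact_mod_cast hsign'.2
      nlinarith [mul_nonneg (le_of_lt (neg_pos.2 hc2)) e1, mul_nonneg (le_of_lt hc1) e2]


theorem exists_proj {k : ℕ} (N : ℕ) (L : List (Aff (k + N))) :
    ∃ L' : List (Aff k), ∀ y : Fin k → ℝ,
      y ∈ HSet L' ↔ ∃ w : Fin N → ℝ, Fin.append y w ∈ HSet L := by
  induction N with
  | zero =>
    refine ⟨L, fun y => ?_⟩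
    have happ : ∀ w : Fin 0 → ℝ, Fin.append y w = y := by
      intro w
      rw [Subsingleton.elim w Fin.elim0, Fin.append_elim0]
      funext i; rfl
    constructor
    · intro hy; exact ⟨Fin.elim0, by rwa [happ]⟩
    · rintro ⟨w, hw⟩; rwa [happ w] at hw
  | succ N ih =>
    obtain ⟨L', hL'⟩ := ih (fmElim L)
    refine ⟨L', fun y => ?_⟩
    rw [hL' y]
    constructor
    · rintro ⟨w, hw⟩
      rw [mem_fmElim] at hw
      obtain ⟨z, hz⟩ := hw
      exact ⟨Fin.snoc w z, by rwa [Fin.append_snoc]⟩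
    · rintro ⟨w, hw⟩
      refine ⟨Fin.init w, ?_⟩
      rw [mem_fmElim]
      refine ⟨w (Fin.last N), ?_⟩
      rwa [← Fin.append_snoc, Fin.snoc_init_self]


-- helper eval lemma
lemma affEval_append {k N : ℕ} (a : Fin k → ℚ) (b : Fin N → ℚ) (c : ℚ)
    (y : Fin k → ℝ) (w : Fin N → ℝ) :
    affEval ((Fin.append a b : Fin (k+N) → ℚ), c) (Fin.append y w)
      = (∑ i, (a i : ℝ) * y i) + (∑ j, (b j : ℝ) * w j) + (c : ℝ) := by
  unfold affEval
  rw [Fin.sum_univ_add]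
  simp only [Fin.append_left, Fin.append_right]

lemma sum_single_mul {ι : Type*} [Fintype ι] [DecidableEq ι] (j : ι) (w : ι → ℝ) :
    ∑ j', (((Pi.single j (1:ℚ) : ι → ℚ) j' : ℚ) : ℝ) * w j' = w j := by
  rw [Finset.sum_eq_single j]
  · simp
  · intro b _ hb; rw [Pi.single_eq_of_ne hb]; simp
  · simp

lemma sum_neg_single_mul {ι : Type*} [Fintype ι] [DecidableEq ι] (j : ι) (w : ι → ℝ) :
    ∑ j', ((((-(Pi.single j (1:ℚ)) : ι → ℚ)) j' : ℚ) : ℝ) * w j' = -w j := by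
  rw [show (∑ j', ((((-(Pi.single j (1:ℚ)) : ι → ℚ)) j' : ℚ) : ℝ) * w j')
      = ∑ j', -((((Pi.single j (1:ℚ) : ι → ℚ) j' : ℚ) : ℝ) * w j') from
    Finset.sum_congr rfl (by intros; simp), Finset.sum_neg_distrib, sum_single_mul]

theorem exists_hrep {k : ℕ} (S : Finset (Fin k → ℝ))
    (hrat : ∀ x ∈ S, ∀ i, ∃ q : ℚ, x i = (q : ℝ)) :
    ∃ L : List (Aff k), convexHull ℝ (S : Set (Fin k → ℝ)) = HSet L := by
  classical
  set N := S.card with hN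
  set e := S.equivFin with he
  set v : Fin N → (Fin k → ℝ) := fun j => (e.symm j : Fin k → ℝ) with hv
  have hvS : ∀ j, v j ∈ S := fun j => (e.symm j).2
  have hq : ∀ j i, ∃ c : ℚ, v j i = (c : ℝ) := fun j i => hrat _ (hvS j) i
  choose q hqc using hq
  -- membership characterization
  have memhull : ∀ x : Fin k → ℝ, x ∈ convexHull ℝ (S : Set (Fin k → ℝ)) ↔
      ∃ w : Fin N → ℝ, (∀ j, 0 ≤ w j) ∧ (∑ j, w j) = 1 ∧
        ∀ i, (∑ j, (q j i : ℝ) * w j) = x i := by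
    intro x
    constructor
    · intro hx
      obtain ⟨w, hw0, hw1, hwx⟩ := Finset.mem_convexHull'.1 hx
      refine ⟨fun j => w (v j), fun j => hw0 _ (hvS j), ?_, ?_⟩
      · rw [← hw1, ← Finset.sum_coe_sort S w]
        exact Equiv.sum_comp e.symm (fun a => w (a : Fin k → ℝ))
      · intro i
        have hsum : (∑ j, w (v j) • v j) = ∑ y ∈ S, w y • y := by
          rw [← Finset.sum_coe_sort S (fun y => w y • y)]
          exact Equiv.sum_comp e.symm (fun a => w (a : Fin k → ℝ) • (a : Fin k → ℝ))
        have h2 := congrFun (hsum.trans hwx) i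
        rw [← h2]
        rw [Finset.sum_apply]
        apply Finset.sum_congr rfl
        intro j _
        simp [← hqc j i]
        ring
    · rintro ⟨w, hw0, hw1, hwx⟩
      have hx : x = ∑ j, w j • v j := by
        funext i
        rw [Finset.sum_apply]
        rw [← hwx i]
        apply Finset.sum_congr rfl
        intro j _
        simp [← hqc j i]
        ring
      rw [hx, ← Finset.centerMass_eq_of_sum_1 Finset.univ v hw1]
      exact Finset.centerMass_mem_convexHull Finset.univ (fun j _ => hw0 j)
        (by rw [hw1]; norm_num) (fun j _ => hvS j)
  -- the system over Fin (k + N)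
  set sys : List (Aff (k + N)) :=
    (List.ofFn fun j : Fin N =>
      ((Fin.append (0 : Fin k → ℚ) (Pi.single j 1), (0:ℚ)) : Aff (k+N))) ++
    ([ (Fin.append (0 : Fin k → ℚ) (1 : Fin N → ℚ), (-1:ℚ)),
       (Fin.append (0 : Fin k → ℚ) (-1 : Fin N → ℚ), (1:ℚ)) ] : List (Aff (k+N))) ++
    (List.ofFn fun i : Fin k =>
      ((Fin.append (Pi.single i 1) (fun j => -(q j i)), (0:ℚ)) : Aff (k+N))) ++
    (List.ofFn fun i : Fin k =>
      ((Fin.append (-(Pi.single i 1) : Fin k → ℚ) (fun j => q j i), (0:ℚ)) : Aff (k+N))) with hsys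
  have e1 : ∀ (y : Fin k → ℝ) (w : Fin N → ℝ) (j : Fin N),
      affEval ((Fin.append (0 : Fin k → ℚ) (Pi.single j 1), (0:ℚ)) : Aff (k+N))
        (Fin.append y w) = w j := by
    intro y w j
    rw [affEval_append, sum_single_mul]
    simp
  have e2 : ∀ (y : Fin k → ℝ) (w : Fin N → ℝ),
      affEval ((Fin.append (0 : Fin k → ℚ) (1 : Fin N → ℚ), (-1:ℚ)) : Aff (k+N))
        (Fin.append y w) = (∑ j, w j) - 1 := by
    intro y w; rw [affEval_append]; simp; ring
  have e3 : ∀ (y : Fin k → ℝ) (w : Fin N → ℝ),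
      affEval ((Fin.append (0 : Fin k → ℚ) (-1 : Fin N → ℚ), (1:ℚ)) : Aff (k+N))
        (Fin.append y w) = 1 - (∑ j, w j) := by
    intro y w; rw [affEval_append]; simp [Finset.sum_neg_distrib]; ring
  have e4 : ∀ (y : Fin k → ℝ) (w : Fin N → ℝ) (i : Fin k),
      affEval ((Fin.append (Pi.single i 1) (fun j => -(q j i)), (0:ℚ)) : Aff (k+N))
        (Fin.append y w) = y i - (∑ j, (q j i : ℝ) * w j) := by
    intro y w i
    rw [affEval_append, sum_single_mul]
    rw [show (∑ j, ((-(q j i) : ℚ) : ℝ) * w j) = ∑ j, -((q j i : ℝ) * w j) from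
      Finset.sum_congr rfl (by intros; push_cast; ring), Finset.sum_neg_distrib]
    simp
    ring
  have e5 : ∀ (y : Fin k → ℝ) (w : Fin N → ℝ) (i : Fin k),
      affEval ((Fin.append (-(Pi.single i 1) : Fin k → ℚ) (fun j => q j i), (0:ℚ)) : Aff (k+N))
        (Fin.append y w) = (∑ j, (q j i : ℝ) * w j) - y i := by
    intro y w i
    rw [affEval_append, sum_neg_single_mul]
    simp
    ring
  have memsys : ∀ (y : Fin k → ℝ) (w : Fin N → ℝ), Fin.append y w ∈ HSet sys ↔
      ((∀ j, 0 ≤ w j) ∧ (∑ j, w j) = 1 ∧ ∀ i, (∑ j, (q j i : ℝ) * w j) = y i) := by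
    intro y w
    constructor
    · intro h
      have hmem : ∀ p ∈ sys, 0 ≤ affEval p (Fin.append y w) := h
      refine ⟨?_, ?_, ?_⟩
      · intro j
        have := hmem _ (by
          rw [hsys]
          apply List.mem_append_left; apply List.mem_append_left; apply List.mem_append_left
          exact List.mem_ofFn.2 ⟨j, rfl⟩)
        rwa [e1 y w j] at this
      · have h2 := hmem _ (by
          rw [hsys]
          apply List.mem_append_left; apply List.mem_append_left; apply List.mem_append_right
          exact List.mem_cons_self)
        have h3 := hmem _ (by
          rw [hsys]
          apply List.mem_append_left; apply List.mem_append_left; apply List.mem_append_right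
          exact List.mem_cons_of_mem _ List.mem_cons_self)
        rw [e2 y w] at h2
        rw [e3 y w] at h3
        linarith
      · intro i
        have h4 := hmem _ (by
          rw [hsys]
          apply List.mem_append_left; apply List.mem_append_right
          exact List.mem_ofFn.2 ⟨i, rfl⟩)
        have h5 := hmem _ (by
          rw [hsys]
          apply List.mem_append_right
          exact List.mem_ofFn.2 ⟨i, rfl⟩)
        rw [e4 y w i] at h4
        rw [e5 y w i] at h5
        linarith
    · rintro ⟨h1, h2, h3⟩
      intro p hp
      rw [hsys] at hp
      rcases List.mem_append.1 hp with hp | hp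
      · rcases List.mem_append.1 hp with hp | hp
        · rcases List.mem_append.1 hp with hp | hp
          · obtain ⟨j, rfl⟩ := List.mem_ofFn.1 hp
            rw [e1 y w j]; exact h1 j
          · rcases List.mem_pair.1 hp with rfl | rfl
            · rw [e2 y w, h2]; norm_num
            · rw [e3 y w, h2]; norm_num
        · obtain ⟨i, rfl⟩ := List.mem_ofFn.1 hp
          rw [e4 y w i, h3 i]; norm_num
      · obtain ⟨i, rfl⟩ := List.mem_ofFn.1 hp
        rw [e5 y w i, h3 i]; norm_num
  obtain ⟨L, hL⟩ := exists_proj N sys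
  refine ⟨L, ?_⟩
  ext x
  rw [hL x, memhull x]
  constructor
  · rintro ⟨w, h1, h2, h3⟩
    exact ⟨w, (memsys x w).2 ⟨h1, h2, h3⟩⟩
  · rintro ⟨w, hw⟩
    obtain ⟨h1, h2, h3⟩ := (memsys x w).1 hw
    exact ⟨w, h1, h2, h3⟩


variable {d : ℕ}

lemma extreme_kernel {L : List (Aff d)} {x : Fin d → ℝ}
    (hx : x ∈ Set.extremePoints ℝ (HSet L)) (v : Fin d → ℝ)
    (hv : ∀ p ∈ L, affEval p x = 0 → linEval p v = 0) : v = 0 := by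
  classical
  by_contra hv0
  obtain ⟨hxH, hxe⟩ := mem_extremePoints.1 hx
  set T : Finset ℝ := insert 1 ((L.toFinset.filter (fun p => affEval p x ≠ 0)).image
    (fun p => affEval p x / (|linEval p v| + 1))) with hT
  have hTne : T.Nonempty := ⟨1, Finset.mem_insert_self _ _⟩
  set ε : ℝ := T.min' hTne with hε
  have hpos : ∀ t ∈ T, 0 < t := by
    intro t ht
    rcases Finset.mem_insert.1 ht with rfl | ht
    · norm_num
    · obtain ⟨p, hp, rfl⟩ := Finset.mem_image.1 ht
      obtain ⟨hpL, hpne⟩ := Finset.mem_filter.1 hp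
      have h0 : 0 ≤ affEval p x := hxH p (List.mem_toFinset.1 hpL)
      have : 0 < affEval p x := lt_of_le_of_ne h0 (Ne.symm hpne)
      positivity
  have hε0 : 0 < ε := hpos _ (T.min'_mem hTne)
  have hbound : ∀ p ∈ L, affEval p x ≠ 0 → ε * (|linEval p v| + 1) ≤ affEval p x := by
    intro p hp hpne
    have hmem : affEval p x / (|linEval p v| + 1) ∈ T := by
      apply Finset.mem_insert_of_mem
      exact Finset.mem_image.2 ⟨p, Finset.mem_filter.2 ⟨List.mem_toFinset.2 hp, hpne⟩, rfl⟩
    have h1 : ε ≤ affEval p x / (|linEval p v| + 1) := T.min'_le _ hmem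
    have h2 : (0:ℝ) < |linEval p v| + 1 := by positivity
    rw [le_div_iff₀ h2] at h1
    linarith
  have hmem : ∀ c : ℝ, |c| ≤ ε → x + c • v ∈ HSet L := by
    intro c hc p hp
    rw [affEval_add_smul]
    by_cases h0 : affEval p x = 0
    · rw [h0, hv p hp h0]
      simp
    · have hb := hbound p hp h0
      have habs : |c * linEval p v| ≤ ε * |linEval p v| := by
        rw [abs_mul]
        exact mul_le_mul_of_nonneg_right hc (abs_nonneg _)
      have h2 : -(ε * |linEval p v|) ≤ c * linEval p v := by
        have := neg_abs_le (c * linEval p v)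
        linarith
      nlinarith
  have hm1 : x + ε • v ∈ HSet L := hmem ε (by rw [abs_of_pos hε0])
  have hm2 : x + (-ε) • v ∈ HSet L := hmem (-ε) (by rw [abs_neg, abs_of_pos hε0])
  have hseg : x ∈ openSegment ℝ (x + ε • v) (x + (-ε) • v) := by
    refine ⟨1/2, 1/2, by norm_num, by norm_num, by norm_num, ?_⟩
    module
  have := (hxe _ hm1 _ hm2 hseg).1
  have hev : ε • v = 0 := by
    have h := congrArg (fun z => z - x) this
    simpa using h
  rcases smul_eq_zero.1 hev with h | h
  · exact absurd h (ne_of_gt hε0)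
  · exact hv0 h

lemma extreme_rat {L : List (Aff d)} {x : Fin d → ℝ}
    (hx : x ∈ Set.extremePoints ℝ (HSet L)) : ∀ i, ∃ c : ℚ, x i = (c : ℝ) := by
  classical
  obtain ⟨hxH, _⟩ := mem_extremePoints.1 hx
  set A : Finset (Aff d) := L.toFinset.filter (fun p => affEval p x = 0) with hA
  set Amap : (Fin d → ℚ) →ₗ[ℚ] ({p // p ∈ A} → ℚ) :=
    LinearMap.pi (fun t => ∑ i, (t.1.1 i) • LinearMap.proj i) with hAmap
  have hAmap_eval : ∀ (y : Fin d → ℚ) (t : {p // p ∈ A}),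
      Amap y t = ∑ i, t.1.1 i * y i := by
    intro y t
    simp [hAmap, LinearMap.pi_apply, LinearMap.sum_apply, LinearMap.smul_apply,
      LinearMap.proj_apply, smul_eq_mul]
  set b : {p // p ∈ A} → ℚ := fun t => -t.1.2 with hb
  have hbmem : b ∈ LinearMap.range Amap := by
    by_contra hbn
    obtain ⟨φ, hφb, hφmap⟩ := Submodule.exists_dual_map_eq_bot_of_notMem hbn inferInstance
    have hφA : ∀ y : Fin d → ℚ, φ (Amap y) = 0 := by
      intro y
      have hmem : φ (Amap y) ∈ Submodule.map φ (LinearMap.range Amap) :=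
        ⟨Amap y, ⟨y, rfl⟩, rfl⟩
      rw [hφmap] at hmem
      exact (Submodule.mem_bot ℚ).1 hmem
    set w : {p // p ∈ A} → ℚ := fun t => φ (fun j => if t = j then 1 else 0) with hw
    have hφeq : ∀ y : {p // p ∈ A} → ℚ, φ y = ∑ t, y t * w t := by
      intro y
      conv_lhs => rw [pi_eq_sum_univ y]
      rw [map_sum]
      apply Finset.sum_congr rfl
      intro t _
      rw [map_smul, smul_eq_mul, hw]
    have key1 : ∀ i, (∑ t, w t * t.1.1 i) = 0 := by
      intro i
      have h1 := hφA (Pi.single i 1)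
      rw [hφeq] at h1
      rw [← h1]
      apply Finset.sum_congr rfl
      intro t _
      rw [hAmap_eval]
      rw [Finset.sum_eq_single i]
      · rw [Pi.single_eq_same, mul_one, mul_comm]
      · intro j _ hj; rw [Pi.single_eq_of_ne hj, mul_zero]
      · simp
    have key2 : (∑ t, b t * w t) ≠ 0 := by
      rw [← hφeq]; exact hφb
    -- real contradiction
    have hreal : ∀ t : {p // p ∈ A}, (∑ i, (t.1.1 i : ℝ) * x i) = (b t : ℝ) := by
      intro t
      have ht := (Finset.mem_filter.1 t.2).2
      unfold affEval at ht
      rw [hb]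
      push_cast
      linarith
    have hzero : ((∑ t, b t * w t : ℚ) : ℝ) = 0 := by
      push_cast
      calc (∑ t, (b t : ℝ) * (w t : ℝ))
          = ∑ t, (∑ i, (t.1.1 i : ℝ) * x i) * (w t : ℝ) := by
            apply Finset.sum_congr rfl; intro t _; rw [hreal t]
        _ = ∑ i, ((∑ t, w t * t.1.1 i : ℚ) : ℝ) * x i := by
            rw [show (∑ t, (∑ i, ((t.1.1 i : ℝ)) * x i) * (w t : ℝ))
                = ∑ t, ∑ i, (((w t : ℝ) * (t.1.1 i : ℝ)) * x i) from
              Finset.sum_congr rfl (by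
                intro t _
                rw [Finset.sum_mul]
                apply Finset.sum_congr rfl
                intros; ring), Finset.sum_comm]
            apply Finset.sum_congr rfl
            intro i _
            push_cast
            rw [Finset.sum_mul]
        _ = 0 := by
            apply Finset.sum_eq_zero
            intro i _
            rw [key1 i]
            simp
    exact absurd hzero (by exact_mod_cast key2)
  obtain ⟨yq, hyq⟩ := hbmem
  set xq : Fin d → ℝ := fun i => (yq i : ℝ) with hxq
  have hdiff : x - xq = 0 := by
    apply extreme_kernel hx
    intro p hp hp0
    have hpA : p ∈ A := Finset.mem_filter.2 ⟨List.mem_toFinset.2 hp, hp0⟩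
    rw [← affEval_sub]
    have hxqv : affEval p xq = 0 := by
      have h1 := congrFun hyq ⟨p, hpA⟩
      rw [hAmap_eval] at h1
      unfold affEval
      rw [hxq]
      have : (∑ i, (p.1 i : ℝ) * (yq i : ℝ)) = ((∑ i, p.1 i * yq i : ℚ) : ℝ) := by push_cast; rfl
      rw [this, h1, hb]
      push_cast
      ring
    rw [hp0, hxqv, sub_zero]
  have hxeq : x = xq := by rwa [sub_eq_zero] at hdiff
  intro i
  exact ⟨yq i, by rw [hxeq]⟩

lemma extreme_finite (L : List (Aff d)) : (Set.extremePoints ℝ (HSet L)).Finite := by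
  classical
  set f : (Fin d → ℝ) → Finset (Aff d) := fun x => L.toFinset.filter (fun p => affEval p x = 0)
    with hf
  have hinj : Set.InjOn f (Set.extremePoints ℝ (HSet L)) := by
    intro x hx y hy hxy
    have hsub : x - y = 0 := by
      apply extreme_kernel hx
      intro p hp hp0
      have hpA : p ∈ f x := Finset.mem_filter.2 ⟨List.mem_toFinset.2 hp, hp0⟩
      rw [hxy] at hpA
      have hpy0 : affEval p y = 0 := (Finset.mem_filter.1 hpA).2
      rw [← affEval_sub, hp0, hpy0, sub_zero]
    rwa [sub_eq_zero] at hsub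
  have himage : (f '' (Set.extremePoints ℝ (HSet L))).Finite := by
    apply Set.Finite.subset (L.toFinset.powerset.finite_toSet)
    rintro _ ⟨x, _, rfl⟩
    exact Finset.mem_coe.2 (Finset.mem_powerset.2 (Finset.filter_subset _ _))
  exact Set.Finite.of_finite_image himage hinj

theorem hrep_vrep (L : List (Aff d)) (hne : (HSet L).Nonempty)
    (hbdd : Bornology.IsBounded (HSet L)) :
    ∃ S : Finset (Fin d → ℝ), S.Nonempty ∧ (∀ x ∈ S, ∀ i, ∃ c : ℚ, x i = (c : ℝ)) ∧
      HSet L = convexHull ℝ (S : Set (Fin d → ℝ)) := by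
  classical
  have hcomp : IsCompact (HSet L) :=
    Metric.isCompact_iff_isClosed_bounded.2 ⟨isClosed_HSet L, hbdd⟩
  have hKM := closure_convexHull_extremePoints hcomp (convex_HSet L)
  have hEfin := extreme_finite L
  refine ⟨hEfin.toFinset, ?_, ?_, ?_⟩
  · rw [← Finset.coe_nonempty, hEfin.coe_toFinset]
    by_contra hE
    rw [Set.not_nonempty_iff_eq_empty] at hE
    rw [hE] at hKM
    simp at hKM
    obtain ⟨z, hz⟩ := hne
    rw [← hKM] at hz
    exact hz
  · intro x hxS
    exact extreme_rat (hEfin.mem_toFinset.1 hxS)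
  · rw [hEfin.coe_toFinset]
    exact hKM.symm.trans (hEfin.isClosed_convexHull (𝕜 := ℝ)).closure_eq


variable {k : ℕ}

lemma intrinsicInterior_extend {C : Set (Fin k → ℝ)}
    {x y : Fin k → ℝ} (hx : x ∈ intrinsicInterior ℝ C) (hy : y ∈ C) :
    ∃ t : ℝ, 0 < t ∧ x + t • (x - y) ∈ C := by
  obtain ⟨x', hx', hxx⟩ := mem_intrinsicInterior.1 hx
  rw [mem_interior_iff_mem_nhds, Metric.mem_nhds_iff] at hx'
  obtain ⟨ε, hε, hball⟩ := hx'
  set t : ℝ := ε / (2 * (‖x - y‖ + 1)) with ht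
  have hden : (0:ℝ) < ‖x - y‖ + 1 := by positivity
  have ht0 : 0 < t := by positivity
  refine ⟨t, ht0, ?_⟩
  set p : Fin k → ℝ := x + t • (x - y) with hp
  have hxC : x ∈ C := intrinsicInterior_subset hx
  have hxs : x ∈ affineSpan ℝ C := subset_affineSpan ℝ C hxC
  have hys : y ∈ affineSpan ℝ C := subset_affineSpan ℝ C hy
  have hps : p ∈ affineSpan ℝ C := by
    have := AffineSubspace.smul_vsub_vadd_mem (affineSpan ℝ C) t hxs hys hxs
    simpa [hp, vsub_eq_sub, vadd_eq_add, add_comm] using this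
  have hdist : dist (⟨p, hps⟩ : affineSpan ℝ C) x' < ε := by
    rw [Subtype.dist_eq, hxx]
    have : dist p x = t * ‖x - y‖ := by
      rw [dist_eq_norm, hp]
      simp [norm_smul, abs_of_pos ht0]
    rw [this]
    have heq : t * (‖x - y‖ + 1) = ε / 2 := by
      rw [ht]; field_simp
    nlinarith [norm_nonneg (x - y)]
  have := hball (Metric.mem_ball.2 hdist)
  simpa using this

lemma sign_constant {C : Set (Fin k → ℝ)} (p : Aff k)
    (hnn : ∀ z ∈ C, 0 ≤ affEval p z) {x : Fin k → ℝ}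
    (hx : x ∈ intrinsicInterior ℝ C) (hx0 : affEval p x = 0) :
    ∀ y ∈ C, affEval p y = 0 := by
  intro y hy
  obtain ⟨t, ht, hmem⟩ := intrinsicInterior_extend hx hy
  have h1 : affEval p (x + t • (x - y)) = affEval p x + t * (affEval p x - affEval p y) := by
    rw [affEval_add_smul, affEval_sub]
  have h2 := hnn _ hmem
  have h3 := hnn y hy
  rw [hx0] at h1
  nlinarith


end RatChamber

open RatChamber

/-- Given finitely many rational polytopes `Q i` inside a rational polytope `P`,
there is a finite rational polytope chamber decomposition of `P` such that on
the intrinsic interior of each face of each chamber, membership in each `Q i`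
is constant: the relative interior of each face is either contained in `Q i` or
disjoint from it. -/
theorem exists_ratPolyChamberDecomp_adapted_on_faces {k n : ℕ}
    (P : Set (Fin k → ℝ)) (hP : IsRationalPolytope P)
    (Q : Fin n → Set (Fin k → ℝ))
    (hQ : ∀ i, IsRationalPolytope (Q i)) (hQP : ∀ i, Q i ⊆ P) :
    ∃ (m : ℕ) (Ps : Fin m → Set (Fin k → ℝ)),
      IsRatPolyChamberDecomp P m Ps ∧
      ∀ (s : Fin m) (F : Set (Fin k → ℝ)), IsFace (Ps s) F →
        ∀ i : Fin n,
          intrinsicInterior ℝ F ⊆ Q i ∨ Disjoint (intrinsicInterior ℝ F) (Q i) := by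
  classical
  obtain ⟨SP, hSPne, hSPrat, hPhull⟩ := hP
  obtain ⟨LP, hLP⟩ := exists_hrep SP hSPrat
  have hPH : P = HSet LP := by rw [hPhull]; exact hLP
  have hLQ' : ∀ i, ∃ L : List (Aff k), Q i = HSet L := by
    intro i
    obtain ⟨S, _, hrat, hhull⟩ := hQ i
    obtain ⟨L, hL⟩ := exists_hrep S hrat
    exact ⟨L, by rw [hhull]; exact hL⟩
  choose LQ hLQ using hLQ'
  set allF : List (Aff k) := (List.finRange n).flatMap LQ with hallF
  have hmemall : ∀ i : Fin n, ∀ p ∈ LQ i, p ∈ allF := by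
    intro i p hp
    exact List.mem_flatMap.2 ⟨i, List.mem_finRange i, hp⟩
  set M := allF.length with hM
  set g : Fin M → Aff k := fun t => allF.get t with hg
  set chamberL : (Fin M → Bool) → List (Aff k) := fun σ =>
    LP ++ List.ofFn (fun t => if σ t then g t else negAff (g t)) with hchamberL
  set Ch : (Fin M → Bool) → Set (Fin k → ℝ) := fun σ => HSet (chamberL σ) with hCh
  -- basic membership characterization of chambers
  have hChmem : ∀ σ x, x ∈ Ch σ ↔ (x ∈ HSet LP ∧
      ∀ t, (σ t = true → 0 ≤ affEval (g t) x) ∧ (σ t = false → affEval (g t) x ≤ 0)) := by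
    intro σ x
    rw [hCh]
    simp only [hchamberL, HSet_append, Set.mem_inter_iff]
    constructor
    · rintro ⟨h1, h2⟩
      refine ⟨h1, fun t => ⟨fun hσ => ?_, fun hσ => ?_⟩⟩
      · have := h2 _ (List.mem_ofFn.2 ⟨t, rfl⟩)
        simp only [hσ, if_true] at this
        exact this
      · have := h2 _ (List.mem_ofFn.2 ⟨t, rfl⟩)
        simp only [hσ, Bool.false_eq_true, if_false, affEval_neg] at this
        linarith
    · rintro ⟨h1, h2⟩
      refine ⟨h1, ?_⟩
      intro p hp
      obtain ⟨t, rfl⟩ := List.mem_ofFn.1 hp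
      cases hσ : σ t with
      | true =>
        simp only [hσ, if_true]
        exact (h2 t).1 hσ
      | false =>
        simp only [hσ, Bool.false_eq_true, if_false, affEval_neg]
        have := (h2 t).2 hσ
        linarith
  have hChsub : ∀ σ, Ch σ ⊆ P := by
    intro σ x hx
    rw [hPH]
    exact ((hChmem σ x).1 hx).1
  -- cover
  have hcover : ∀ x ∈ P, x ∈ Ch (fun t => decide (0 ≤ affEval (g t) x)) := by
    intro x hx
    rw [hChmem]
    refine ⟨by rwa [← hPH], fun t => ⟨fun h => of_decide_eq_true h, fun h => ?_⟩⟩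
    have := of_decide_eq_false h
    linarith
  -- canonical description of a chamber from a relative interior point
  have hdesc : ∀ σ x, x ∈ intrinsicInterior ℝ (Ch σ) →
      Ch σ = {y | y ∈ HSet LP ∧ ∀ t,
        (0 < affEval (g t) x → 0 ≤ affEval (g t) y) ∧
        (affEval (g t) x < 0 → affEval (g t) y ≤ 0) ∧
        (affEval (g t) x = 0 → affEval (g t) y = 0)} := by
    intro σ x hx
    have hxC : x ∈ Ch σ := intrinsicInterior_subset hx
    have hxm := (hChmem σ x).1 hxC
    ext y
    constructor
    · intro hy
      have hym := (hChmem σ y).1 hy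
      refine ⟨hym.1, fun t => ⟨fun h => ?_, fun h => ?_, fun h => ?_⟩⟩
      · -- 0 < value at x : then σ t must be true
        cases hσ : σ t with
        | true => exact (hym.2 t).1 hσ
        | false => have := (hxm.2 t).2 hσ; linarith
      · cases hσ : σ t with
        | true => have := (hxm.2 t).1 hσ; linarith
        | false => exact (hym.2 t).2 hσ
      · -- value 0 at x : constant 0 on chamber
        cases hσ : σ t with
        | true =>
          exact sign_constant (g t) (fun z hz => ((hChmem σ z).1 hz).2 t |>.1 hσ) hx h y hy
        | false =>
          have hneg : ∀ z ∈ Ch σ, 0 ≤ affEval (negAff (g t)) z := by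
            intro z hz
            rw [affEval_neg]
            have := ((hChmem σ z).1 hz).2 t |>.2 hσ
            linarith
          have h0 : affEval (negAff (g t)) x = 0 := by rw [affEval_neg, h, neg_zero]
          have := sign_constant (negAff (g t)) hneg hx h0 y hy
          rw [affEval_neg] at this
          linarith
    · rintro ⟨h1, h2⟩
      rw [hChmem]
      refine ⟨h1, fun t => ⟨fun hσ => ?_, fun hσ => ?_⟩⟩
      · rcases lt_trichotomy (affEval (g t) x) 0 with h | h | h
        · have := (hxm.2 t).1 hσ; linarith
        · rw [(h2 t).2.2 h]
        · exact (h2 t).1 h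
      · rcases lt_trichotomy (affEval (g t) x) 0 with h | h | h
        · exact (h2 t).2.1 h
        · rw [(h2 t).2.2 h]
        · have := (hxm.2 t).2 hσ; linarith
  have hkey : ∀ σ τ x, x ∈ intrinsicInterior ℝ (Ch σ) → x ∈ intrinsicInterior ℝ (Ch τ) →
      Ch σ = Ch τ := by
    intro σ τ x h1 h2
    rw [hdesc σ x h1, hdesc τ x h2]
  -- boundedness
  have hPbd : Bornology.IsBounded P := by
    rw [hPhull]
    exact (SP.finite_toSet.isCompact_convexHull (𝕜 := ℝ)).isBounded
  have hChrat : ∀ σ, (Ch σ).Nonempty → IsRationalPolytope (Ch σ) := by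
    intro σ hne
    obtain ⟨S, hSne, hSrat, hSeq⟩ := hrep_vrep (chamberL σ) hne
      ((hPbd.subset (hChsub σ)))
    exact ⟨S, hSne, hSrat, hSeq⟩
  -- index the distinct nonempty chambers
  set 𝒞 : Set (Set (Fin k → ℝ)) := {C | (∃ σ, C = Ch σ) ∧ C.Nonempty} with h𝒞
  have h𝒞fin : 𝒞.Finite := by
    apply Set.Finite.subset (Set.finite_range Ch)
    rintro C ⟨⟨σ, rfl⟩, -⟩
    exact ⟨σ, rfl⟩
  set F𝒞 := h𝒞fin.toFinset with hF𝒞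
  set m := F𝒞.card with hm
  set eqv := F𝒞.equivFin with heqv
  set Ps : Fin m → Set (Fin k → ℝ) := fun s => ((eqv.symm s : {C // C ∈ F𝒞}) : Set (Fin k → ℝ))
    with hPs
  have hPsmem : ∀ s, Ps s ∈ 𝒞 := by
    intro s
    have := (eqv.symm s).2
    rwa [h𝒞fin.mem_toFinset] at this
  have hPsinj : Function.Injective Ps := by
    intro s t h
    have : eqv.symm s = eqv.symm t := Subtype.ext h
    exact eqv.symm.injective this
  have hPssurj : ∀ C ∈ 𝒞, ∃ s, Ps s = C := by
    intro C hC
    refine ⟨eqv ⟨C, h𝒞fin.mem_toFinset.2 hC⟩, ?_⟩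
    rw [hPs]
    simp
  refine ⟨m, Ps, ⟨?_, ?_, ?_⟩, ?_⟩
  · -- rationality
    intro s
    obtain ⟨⟨σ, hσ⟩, hne⟩ := hPsmem s
    rw [hσ] at hne ⊢
    exact hChrat σ hne
  · -- union
    apply Set.Subset.antisymm
    · apply Set.iUnion_subset
      intro s
      obtain ⟨⟨σ, hσ⟩, -⟩ := hPsmem s
      rw [hσ]
      exact hChsub σ
    · intro x hx
      have hxch := hcover x hx
      have hmem𝒞 : Ch (fun t => decide (0 ≤ affEval (g t) x)) ∈ 𝒞 :=
        ⟨⟨_, rfl⟩, ⟨x, hxch⟩⟩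
      obtain ⟨s, hs⟩ := hPssurj _ hmem𝒞
      exact Set.mem_iUnion.2 ⟨s, by rw [hs]; exact hxch⟩
  · -- disjointness
    intro s t hst
    by_contra hdis
    obtain ⟨x, hx1, hx2⟩ := Set.not_disjoint_iff.1 hdis
    obtain ⟨⟨σ, hσ⟩, -⟩ := hPsmem s
    obtain ⟨⟨τ, hτ⟩, -⟩ := hPsmem t
    rw [hσ] at hx1
    rw [hτ] at hx2
    have : Ps s = Ps t := by rw [hσ, hτ, hkey σ τ x hx1 hx2]
    exact hst (hPsinj this)
  · -- adaptation on faces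
    intro s F hF i
    by_cases hdisj : Disjoint (intrinsicInterior ℝ F) (Q i)
    · exact Or.inr hdisj
    left
    obtain ⟨z, hzF, hzQ⟩ := Set.not_disjoint_iff.1 hdisj
    obtain ⟨⟨σ, hσ⟩, -⟩ := hPsmem s
    have hFsub : F ⊆ Ch σ := by rw [← hσ]; exact hF.2.2.2.1
    intro y hyF
    rw [hLQ i]
    intro p hp
    obtain ⟨t, ht⟩ := List.mem_iff_get.1 (hmemall i p hp)
    have hgt : g t = p := ht
    have hyF' : y ∈ F := intrinsicInterior_subset hyF
    cases hσt : σ t with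
    | true =>
      have := ((hChmem σ y).1 (hFsub hyF')).2 t |>.1 hσt
      rwa [hgt] at this
    | false =>
      -- the functional is ≤ 0 on the chamber, and = 0 at z ∈ relint F ∩ Q i
      have hneg : ∀ u ∈ F, 0 ≤ affEval (negAff p) u := by
        intro u hu
        rw [affEval_neg]
        have := ((hChmem σ u).1 (hFsub hu)).2 t |>.2 hσt
        rw [hgt] at this
        linarith
      have hz0 : affEval (negAff p) z = 0 := by
        rw [affEval_neg]
        have h1 : 0 ≤ affEval p z := by
          have := hzQ
          rw [hLQ i] at this
          exact this p hp
        have h2 : affEval p z ≤ 0 := by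
          have := ((hChmem σ z).1 (hFsub (intrinsicInterior_subset hzF))).2 t |>.2 hσt
          rwa [hgt] at this
        linarith
      have := sign_constant (negAff p) hneg hzF hz0 y hyF'
      rw [affEval_neg] at this
      linarith
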